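/- Lemma (the paper's Lemma 3.7, stability of the birth level). Let r be an order with levels on X, let (τ₀, ω₀) be a persistence pair of r, let ε > 0, and let q = (q̂, ≼_q) ∈ R_ε. Then q̂(τ_{q,ω₀}) − ε/2 < r̂(τ₀). -/

import Mathlib

open scoped Classical

namespace StableVol

/-- A finite abstract simplicial complex of dimension `n`: a finite family of nonempty
finite subsets of the vertex set, closed under nonempty subsets, in which every element
is contained in an element of cardinality `n+1`. -/
structure NComplex (V : Type*) [DecidableEq V] (n : ℕ) where
  X : Finset (Finset V)
  nonempty_mem : ∀ σ ∈ X, σ.Nonempty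
  down_closed : ∀ σ ∈ X, ∀ σ' : Finset V, σ' ⊆ σ → σ'.Nonempty → σ' ∈ X
  contained_top : ∀ σ ∈ X, ∃ ω ∈ X, σ ⊆ ω ∧ ω.card = n + 1

variable {V : Type*} [DecidableEq V] {n : ℕ}

/-- An `n`-cell is either an `n`-simplex (`some ω`) or the formal cell `ω∞` (`none`). -/
abbrev Cell (V : Type*) := Option (Finset V)

/-- `τ` is a face of the cell `c`.  For `c = some ω` this means that `ω` is an
`n`-simplex of `X` containing `τ`; the faces of `ω∞ = none` are the `(n-1)`-simplices
having exactly one `n`-simplex coface. -/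
def faceCell (C : NComplex V n) (τ : Finset V) : Cell V → Prop
  | some ω => ω ∈ C.X ∧ ω.card = n + 1 ∧ τ ⊆ ω
  | none => {ω | ω ∈ C.X ∧ ω.card = n + 1 ∧ τ ⊆ ω}.ncard = 1

def IsCell (C : NComplex V n) : Cell V → Prop
  | some ω => ω ∈ C.X ∧ ω.card = n + 1
  | none => True

/-- Adjacency in the dual graph, restricted to the edge set `E ⊆ X^(n-1)`. -/
def adj (C : NComplex V n) (E : Set (Finset V)) (c c' : Cell V) : Prop :=
  ∃ τ ∈ E, faceCell C τ c ∧ faceCell C τ c' ∧ c ≠ c'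

/-- `KV C E c₀`: the set of `n`-cells in the connected component of `c₀` in the
subgraph of the dual graph with edge set `E`. -/
def KV (C : NComplex V n) (E : Set (Finset V)) (c₀ : Cell V) : Set (Cell V) :=
  {c | Relation.ReflTransGen (adj C E) c₀ c}

/-- Every `(n-1)`-simplex of `X` is a face of exactly two `n`-cells. -/
def TwoCofaces (C : NComplex V n) : Prop :=
  ∀ τ ∈ C.X, τ.card = n →
    ∃ c₁ c₂ : Cell V, c₁ ≠ c₂ ∧ ∀ c : Cell V, faceCell C τ c ↔ (c = c₁ ∨ c = c₂)

/-- The dual graph (with full edge set `X^(n-1)`) is connected. -/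
def DualConn (C : NComplex V n) : Prop :=
  ∀ c c' : Cell V, IsCell C c → IsCell C c' →
    c' ∈ KV C {τ | τ ∈ C.X ∧ τ.card = n} c

/-- A level function: monotone with respect to strict inclusion of simplices. -/
def IsLevelFun (C : NComplex V n) (lev : Finset V → ℝ) : Prop :=
  ∀ σ ∈ C.X, ∀ σ' ∈ C.X, σ ⊂ σ' → lev σ ≤ lev σ'

/-- `(lev, slt)` is an order with levels on `X`: `lev` is a level function and `slt`
is (the strict form of) a linear order on `X` refining both `lev` and strict
inclusion. -/
def IsOWL (C : NComplex V n) (lev : Finset V → ℝ)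
    (slt : Finset V → Finset V → Prop) : Prop :=
  IsLevelFun C lev ∧
  (∀ σ ∈ C.X, ¬ slt σ σ) ∧
  (∀ σ ∈ C.X, ∀ σ' ∈ C.X, ∀ σ'' ∈ C.X, slt σ σ' → slt σ' σ'' → slt σ σ'') ∧
  (∀ σ ∈ C.X, ∀ σ' ∈ C.X, σ ≠ σ' → slt σ σ' ∨ slt σ' σ) ∧
  (∀ σ ∈ C.X, ∀ σ' ∈ C.X, slt σ σ' → lev σ ≤ lev σ') ∧
  (∀ σ ∈ C.X, ∀ σ' ∈ C.X, σ ⊂ σ' → slt σ σ')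

/-- Extension of a strict order on simplices to `n`-cells, `ω∞ = none` being the
unique maximum. -/
def cslt (slt : Finset V → Finset V → Prop) : Cell V → Cell V → Prop
  | some σ, some σ' => slt σ σ'
  | some _, none => True
  | none, _ => False

/-- `m` is the maximum cell of the set `S` with respect to the order `slt`. -/
def IsMaxCell (slt : Finset V → Finset V → Prop) (S : Set (Cell V)) (m : Cell V) :
    Prop :=
  m ∈ S ∧ ∀ c ∈ S, c ≠ m → cslt slt c m

/-- Edge set of `G(≻ σ₀)`: the `(n-1)`-simplices strictly above `σ₀`. -/
def Egt (C : NComplex V n) (slt : Finset V → Finset V → Prop) (σ₀ : Finset V) :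
    Set (Finset V) :=
  {τ | τ ∈ C.X ∧ τ.card = n ∧ slt σ₀ τ}

/-- Edge set of `G(⪰ σ₀)`. -/
def Ege (C : NComplex V n) (slt : Finset V → Finset V → Prop) (σ₀ : Finset V) :
    Set (Finset V) :=
  {τ | τ ∈ C.X ∧ τ.card = n ∧ (τ = σ₀ ∨ slt σ₀ τ)}

/-- Edge set of `G(lev ≥ s)`. -/
def Elev (C : NComplex V n) (lev : Finset V → ℝ) (s : ℝ) : Set (Finset V) :=
  {τ | τ ∈ C.X ∧ τ.card = n ∧ s ≤ lev τ}

/-- `(τ₀, ω₀)` is a persistence pair of the order `slt`: the two `n`-cells having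
`τ₀` as a face lie in distinct connected components of `G(≻ τ₀)`, and `ω₀` is the
smaller of the two maximum cells of these two components. -/
def IsPersPair (C : NComplex V n) (slt : Finset V → Finset V → Prop)
    (τ₀ ω₀ : Finset V) : Prop :=
  τ₀ ∈ C.X ∧ τ₀.card = n ∧ ω₀ ∈ C.X ∧ ω₀.card = n + 1 ∧
  ∃ c₁ c₂ : Cell V, c₁ ≠ c₂ ∧ faceCell C τ₀ c₁ ∧ faceCell C τ₀ c₂ ∧
    c₂ ∉ KV C (Egt C slt τ₀) c₁ ∧
    ∃ m₂ : Cell V,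
      IsMaxCell slt (KV C (Egt C slt τ₀) c₁) (some ω₀) ∧
      IsMaxCell slt (KV C (Egt C slt τ₀) c₂) m₂ ∧
      cslt slt (some ω₀) m₂

/-- The optimal volume `OV(q, ω₀) = K_V(G(≻_q τ_{q,ω₀}), ω₀)`. -/
def OV (C : NComplex V n) (slt : Finset V → Finset V → Prop) (ω₀ : Finset V) :
    Set (Cell V) :=
  {c | ∃ τ, IsPersPair C slt τ ω₀ ∧ c ∈ KV C (Egt C slt τ) (some ω₀)}

/-- The stable volume `SV_ε(r, τ₀, ω₀) = K_V(G(r̂ ≥ r̂(τ₀) + ε), ω₀)`. -/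
def SV (C : NComplex V n) (lev : Finset V → ℝ) (τ₀ ω₀ : Finset V) (ε : ℝ) :
    Set (Cell V) :=
  KV C (Elev C lev (lev τ₀ + ε)) (some ω₀)

/-- `(qlev, qslt) ∈ R_ε`: an order with levels uniformly `ε/2`-close to `rlev`
satisfying the `(r, ω₀)`-order condition. -/
def InR (C : NComplex V n) (rlev : Finset V → ℝ)
    (rslt : Finset V → Finset V → Prop) (ω₀ : Finset V) (ε : ℝ)
    (qlev : Finset V → ℝ) (qslt : Finset V → Finset V → Prop) : Prop :=
  IsOWL C qlev qslt ∧ (∀ σ ∈ C.X, |qlev σ - rlev σ| < ε / 2) ∧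
  (∀ σ ∈ C.X, rslt σ ω₀ → qslt σ ω₀)

/-- `F_{ε,n}`: the `n`-simplices with level at least `lev τ₀ + ε` that precede `ω₀`. -/
def Fcells (C : NComplex V n) (lev : Finset V → ℝ)
    (slt : Finset V → Finset V → Prop) (τ₀ ω₀ : Finset V) (ε : ℝ) :
    Set (Finset V) :=
  {σ | σ ∈ C.X ∧ σ.card = n + 1 ∧ lev τ₀ + ε ≤ lev σ ∧ slt σ ω₀}

/-- `F_{ε,n-1}`: the `(n-1)`-simplices with level at least `lev τ₀ + ε` that
precede `ω₀`. -/
def Fedges (C : NComplex V n) (lev : Finset V → ℝ)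
    (slt : Finset V → Finset V → Prop) (τ₀ ω₀ : Finset V) (ε : ℝ) :
    Set (Finset V) :=
  {σ | σ ∈ C.X ∧ σ.card = n ∧ lev τ₀ + ε ≤ lev σ ∧ slt σ ω₀}

/-- `τ*(∂z)`: the `ℤ/2ℤ`-sum of the coefficients of `z` over the `n`-simplex
cofaces of `τ`. -/
def bsum (C : NComplex V n) (τ : Finset V) (z : Finset V → ZMod 2) : ZMod 2 :=
  ∑ ω ∈ C.X.filter (fun ω => ω.card = n + 1 ∧ τ ⊆ ω), z ω

/-- A feasible chain `z = ω₀ + Σ_{ω ∈ F_{ε,n}} α_ω ω` with `τ*(∂z) = 0` for all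
`τ ∈ F_{ε,n-1}`. -/
def IsFeasible (C : NComplex V n) (lev : Finset V → ℝ)
    (slt : Finset V → Finset V → Prop) (τ₀ ω₀ : Finset V) (ε : ℝ)
    (z : Finset V → ZMod 2) : Prop :=
  z ω₀ = 1 ∧
  (∀ ω : Finset V, ω ≠ ω₀ → ω ∉ Fcells C lev slt τ₀ ω₀ ε → z ω = 0) ∧
  (∀ τ ∈ Fedges C lev slt τ₀ ω₀ ε, bsum C τ z = 0)

/-- `‖z‖₀`: the number of simplices of `X` with nonzero coefficient in `z`. -/
def norm0 (C : NComplex V n) (z : Finset V → ZMod 2) : ℕ :=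
  (C.X.filter fun ω => z ω ≠ 0).card

/-- The level function of the perturbed order `q(r, η, A)`. -/
noncomputable def pertLev (C : NComplex V n) (rlev : Finset V → ℝ) (η : ℝ)
    (A : Set (Finset V)) : Finset V → ℝ :=
  fun σ => if (σ ∈ C.X ∧ σ.card = n + 1) ∨ σ ∈ A then rlev σ + η else rlev σ - η

/-- The strict order of the perturbed order `q(r, η, A)`. -/
def pertSlt (C : NComplex V n) (rlev : Finset V → ℝ)
    (rslt : Finset V → Finset V → Prop) (η : ℝ) (A : Set (Finset V)) :
    Finset V → Finset V → Prop :=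
  fun σ σ' => pertLev C rlev η A σ < pertLev C rlev η A σ' ∨
    (pertLev C rlev η A σ = pertLev C rlev η A σ' ∧ rslt σ σ')

/-- The `(n-1)`-simplices that are edges of the connected component of `c₀` in the
subgraph with edge set `E`. -/
def compEdges (C : NComplex V n) (E : Set (Finset V)) (c₀ : Cell V) :
    Set (Finset V) :=
  {τ | τ ∈ E ∧ ∃ c, faceCell C τ c ∧ c ∈ KV C E c₀}

/-- `IsPath C E c c' vs es`: `vs` is the vertex list and `es` the edge list of a walk
from `c` to `c'` in the subgraph of the dual graph with edge set `E`. -/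
inductive IsPath (C : NComplex V n) (E : Set (Finset V)) :
    Cell V → Cell V → List (Cell V) → List (Finset V) → Prop
  | nil (c : Cell V) : IsPath C E c c [c] []
  | cons {c c' c'' : Cell V} {vs : List (Cell V)} {es : List (Finset V)}
      {τ : Finset V} : τ ∈ E → faceCell C τ c → faceCell C τ c' → c ≠ c' →
      IsPath C E c' c'' vs es → IsPath C E c c'' (c :: vs) (τ :: es)


lemma adj_symm (C : NComplex V n) (E : Set (Finset V)) : Symmetric (adj C E) := by
  rintro a b ⟨τ, hτ, f1, f2, ne⟩
  exact ⟨τ, hτ, f2, f1, ne.symm⟩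

lemma KV_mono {C : NComplex V n} {E E' : Set (Finset V)} (hE : E ⊆ E') (c₀ : Cell V) :
    KV C E c₀ ⊆ KV C E' c₀ := fun _ h =>
  Relation.ReflTransGen.mono (r := adj C E) (p := adj C E')
    (fun _ _ hab => by obtain ⟨τ, hτ, f1, f2, ne⟩ := hab; exact ⟨τ, hE hτ, f1, f2, ne⟩) _ _ h

lemma exists_face_of_mem_KV {C : NComplex V n} {E : Set (Finset V)} {c₀ c : Cell V}
    (h : c ∈ KV C E c₀) (hne : c ≠ c₀) : ∃ τ, faceCell C τ c := by
  rcases Relation.ReflTransGen.cases_tail h with h' | ⟨b, _, hbc⟩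
  · exact absurd h' hne
  · obtain ⟨τ, _, _, hf, _⟩ := hbc
    exact ⟨τ, hf⟩

/-- Lemma 3.7, stability of the birth level: for any `q ∈ R_ε`,
`q̂(τ_{q,ω₀}) - ε/2 < r̂(τ₀)`. -/
theorem birth_level_stability
    (hn : 2 ≤ n) (C : NComplex V n) (htwo : TwoCofaces C) (hconn : DualConn C)
    (rlev : Finset V → ℝ) (rslt : Finset V → Finset V → Prop)
    (hr : IsOWL C rlev rslt)
    (τ₀ ω₀ : Finset V) (hpair : IsPersPair C rslt τ₀ ω₀)
    (ε : ℝ) (hε : 0 < ε)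
    (qlev : Finset V → ℝ) (qslt : Finset V → Finset V → Prop)
    (hq : InR C rlev rslt ω₀ ε qlev qslt) :
    ∀ τq : Finset V, IsPersPair C qslt τq ω₀ → qlev τq - ε / 2 < rlev τ₀ := by
  rintro τq hqpair
  by_contra hcon
  push_neg at hcon
  obtain ⟨hτ₀X, hτ₀card, hω₀X, hω₀card, c₁, c₂, hc12, hf1, hf2, hnK, m₂, hmax₁, hmax₂, hlt⟩ :=
    hpair
  obtain ⟨hτqX, hτqcard, _, _, c₁', c₂', hc12', hf1', hf2', hnK', m₂', hmax₁', hmax₂', hlt'⟩ :=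
    hqpair
  obtain ⟨hqowl, hclose, hcond⟩ := hq
  obtain ⟨_, hqirr, hqtrans, _, hqmono, _⟩ := hqowl
  obtain ⟨_, _, _, hrtot, hrmono, _⟩ := hr
  -- Any simplex with q-level at least that of τq is r-above τ₀.
  have hlev : ∀ σ ∈ C.X, qlev τq ≤ qlev σ → rslt τ₀ σ := by
    intro σ hσ hle
    have h2 := hclose σ hσ
    rw [abs_lt] at h2
    have h3 : rlev τ₀ < rlev σ := by linarith
    have hne : τ₀ ≠ σ := by
      rintro rfl; exact lt_irrefl _ h3
    rcases hrtot τ₀ hτ₀X σ hσ hne with h | h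
    · exact h
    · exact absurd (hrmono σ hσ τ₀ hτ₀X h) (by linarith)
  have hEsub : Egt C qslt τq ⊆ Egt C rslt τ₀ := by
    rintro τ ⟨hτX, hτc, hτgt⟩
    exact ⟨hτX, hτc, hlev τ hτX (hqmono τq hτqX τ hτX hτgt)⟩
  have hτqE : τq ∈ Egt C rslt τ₀ := ⟨hτqX, hτqcard, hlev τq hτqX le_rfl⟩
  -- m₂' lies in the r-component of c₁ in G(≻_r τ₀).
  have hω₀K : Relation.ReflTransGen (adj C (Egt C rslt τ₀)) c₁' (some ω₀) :=
    KV_mono hEsub c₁' hmax₁'.1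
  have hm₂K : Relation.ReflTransGen (adj C (Egt C rslt τ₀)) c₂' m₂' :=
    KV_mono hEsub c₂' hmax₂'.1
  have hadj : adj C (Egt C rslt τ₀) c₁' c₂' := ⟨τq, hτqE, hf1', hf2', hc12'⟩
  have hchain : m₂' ∈ KV C (Egt C rslt τ₀) c₁ := by
    have s1 : Relation.ReflTransGen (adj C (Egt C rslt τ₀)) c₁ (some ω₀) := hmax₁.1
    have s2 : Relation.ReflTransGen (adj C (Egt C rslt τ₀)) (some ω₀) c₁' :=
      (haveI : Std.Symm (adj C (Egt C rslt τ₀)) := ⟨fun _ _ h => adj_symm C _ h⟩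
       Std.Symm.symm _ _ hω₀K)
    exact s1.trans (s2.trans ((Relation.ReflTransGen.single hadj).trans hm₂K))
  -- m₂' must be a proper n-simplex (not ω∞), say m₂' = some μ.
  cases m₂' with
  | none =>
      exact hmax₁.2 none hchain (fun h => by cases h)
  | some μ =>
      have hqω₀μ : qslt ω₀ μ := hlt'
      have hμX : μ ∈ C.X := by
        by_cases hc : (some μ : Cell V) = c₁
        · rw [← hc] at hf1; exact hf1.1
        · obtain ⟨τ', hf'⟩ := exists_face_of_mem_KV hchain hc
          exact hf'.1
      have hμne : (some μ : Cell V) ≠ some ω₀ := by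
        intro h
        have : μ = ω₀ := Option.some_injective _ h
        subst this
        exact hqirr μ hμX hqω₀μ
      have hrμω : rslt μ ω₀ := hmax₁.2 (some μ) hchain hμne
      have hq2 : qslt μ ω₀ := hcond μ hμX hrμω
      exact hqirr ω₀ hω₀X (hqtrans ω₀ hω₀X μ hμX ω₀ hω₀X hqω₀μ hq2)

end StableVol
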